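/- For every positive integer m, the number of cyclic subgroups of the direct product ℤ₂ × ℤ_{2^m} equals 2m + 2. -/

import Mathlib

open Subgroup Multiplicative

namespace CardCyclicAux

lemma isCyclic_zpowers {G : Type*} [Group G] (g : G) : IsCyclic (Subgroup.zpowers g) :=
  ⟨⟨⟨g, Subgroup.mem_zpowers g⟩, fun x => by
    obtain ⟨n, hn⟩ := x.2; exact ⟨n, Subtype.ext (by simpa using hn)⟩⟩⟩

lemma eq_zpowers_of_isCyclic {G : Type*} [Group G] (H : Subgroup G) (h : IsCyclic H) :
    ∃ g : G, H = Subgroup.zpowers g := by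
  obtain ⟨⟨g, hg⟩, hgen⟩ := h.exists_generator
  refine ⟨g, le_antisymm ?_ (Subgroup.zpowers_le.mpr hg)⟩
  intro x hx
  obtain ⟨n, hn⟩ := hgen ⟨x, hx⟩
  exact ⟨n, congrArg Subtype.val hn⟩

lemma zpowers_pow_eq {G : Type*} [Group G] (g : G) (u : ℕ)
    (hc : Nat.Coprime u (orderOf g)) (h1 : 1 < orderOf g) :
    Subgroup.zpowers (g ^ u) = Subgroup.zpowers g := by
  refine le_antisymm (Subgroup.zpowers_le.mpr (Subgroup.pow_mem _ (Subgroup.mem_zpowers g) u)) ?_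
  refine Subgroup.zpowers_le.mpr ?_
  obtain ⟨v, -, hv⟩ := Nat.exists_mul_mod_eq_one_of_coprime hc h1
  refine Subgroup.mem_zpowers_iff.mpr ⟨(v : ℤ), ?_⟩
  rw [zpow_natCast, ← pow_mul, ← pow_mod_orderOf, hv, pow_one]

lemma Z1 (m j : ℕ) (hj : j < m) (n : ℤ) :
    n • ((2^j : ℕ) : ZMod (2^m)) = 0 ↔ (2:ℤ)^(m-j) ∣ n := by
  haveI : NeZero (2^m) := ⟨by positivity⟩
  have h2 : (2:ℤ)^(m-j) * 2^j = 2^m := by rw [← pow_add]; congr 1; omega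
  rw [zsmul_eq_mul, show (((2^j : ℕ) : ZMod (2^m))) = (((2:ℤ)^j : ℤ) : ZMod (2^m)) by push_cast; ring,
    ← Int.cast_mul, ZMod.intCast_zmod_eq_zero_iff_dvd]
  rw [show ((2^m : ℕ) : ℤ) = (2:ℤ)^m by push_cast; ring, ← h2,
    mul_dvd_mul_iff_right (pow_ne_zero _ (two_ne_zero))]

lemma two_dvd_of_Z1 {m j : ℕ} (hj : j < m) {n : ℤ}
    (h : n • ((2^j : ℕ) : ZMod (2^m)) = 0) : (2:ℤ) ∣ n :=
  dvd_trans (dvd_pow_self 2 (by omega : m - j ≠ 0)) ((Z1 m j hj n).mp h)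

lemma ha_not_b (m j : ℕ) (hj : j < m) :
    ((ofAdd 1, 1) : Multiplicative (ZMod 2) × Multiplicative (ZMod (2^m))) ∉
      Subgroup.zpowers ((1, ofAdd ((2^j : ℕ) : ZMod (2^m))) : _ × _) := by
  simp [Subgroup.mem_zpowers_iff, Prod.ext_iff]
  intro h
  exact absurd h (by decide)

lemma ha_not_c (m j : ℕ) (hj : j < m) :
    ((ofAdd 1, 1) : Multiplicative (ZMod 2) × Multiplicative (ZMod (2^m))) ∉
      Subgroup.zpowers ((ofAdd 1, ofAdd ((2^j : ℕ) : ZMod (2^m))) : _ × _) := by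
  rintro ⟨n, hn⟩
  have h1 : (ofAdd (1 : ZMod 2))^n = ofAdd 1 := congrArg Prod.fst hn
  have h2 : (ofAdd ((2^j : ℕ) : ZMod (2^m)))^n = 1 := congrArg Prod.snd hn
  rw [← ofAdd_zsmul] at h1
  rw [← ofAdd_zsmul, show (1 : Multiplicative (ZMod (2^m))) = ofAdd 0 from rfl] at h2
  have h1' : n • (1 : ZMod 2) = 1 := ofAdd.injective h1
  have h2' : n • ((2^j : ℕ) : ZMod (2^m)) = 0 := ofAdd.injective h2
  have hodd : ¬ (2:ℤ) ∣ n := by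
    intro hd
    rw [zsmul_eq_mul, mul_one, (ZMod.intCast_zmod_eq_zero_iff_dvd n 2).mpr hd] at h1'
    exact absurd h1' (by decide)
  exact hodd (two_dvd_of_Z1 hj h2')

lemma hb_not_c (m j : ℕ) (hj : j < m) :
    ((1, ofAdd ((2^j : ℕ) : ZMod (2^m))) : Multiplicative (ZMod 2) × Multiplicative (ZMod (2^m))) ∉
      Subgroup.zpowers ((ofAdd 1, ofAdd ((2^j : ℕ) : ZMod (2^m))) : _ × _) := by
  rintro ⟨n, hn⟩
  have h1 : (ofAdd (1 : ZMod 2))^n = 1 := congrArg Prod.fst hn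
  have h2 : (ofAdd ((2^j : ℕ) : ZMod (2^m)))^n = ofAdd ((2^j : ℕ) : ZMod (2^m)) :=
    congrArg Prod.snd hn
  rw [← ofAdd_zsmul, show (1 : Multiplicative (ZMod 2)) = ofAdd 0 from rfl] at h1
  rw [← ofAdd_zsmul] at h2
  have h1' : n • (1 : ZMod 2) = 0 := ofAdd.injective h1
  have h2' : n • ((2^j : ℕ) : ZMod (2^m)) = ((2^j : ℕ) : ZMod (2^m)) := ofAdd.injective h2
  have heven : (2:ℤ) ∣ n := by
    rw [zsmul_eq_mul, mul_one] at h1'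
    exact (ZMod.intCast_zmod_eq_zero_iff_dvd n 2).mp h1'
  have h3 : (n - 1) • ((2^j : ℕ) : ZMod (2^m)) = 0 := by
    rw [sub_smul, h2', one_smul, sub_self]
  have := two_dvd_of_Z1 hj h3
  omega

def gens (m : ℕ) : Bool ⊕ Fin m ⊕ Fin m →
    Multiplicative (ZMod 2) × Multiplicative (ZMod (2^m))
  | .inl false => 1
  | .inl true => (ofAdd 1, 1)
  | .inr (.inl j) => (1, ofAdd ((2^(j:ℕ) : ℕ) : ZMod (2^m)))
  | .inr (.inr j) => (ofAdd 1, ofAdd ((2^(j:ℕ) : ℕ) : ZMod (2^m)))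

lemma orderOf_pow2 (m j : ℕ) (hj : j < m) :
    orderOf (ofAdd ((2^j : ℕ) : ZMod (2^m)) : Multiplicative (ZMod (2^m))) = 2^(m-j) := by
  rw [orderOf_ofAdd_eq_addOrderOf, ZMod.addOrderOf_coe _ (by positivity),
    Nat.gcd_eq_right (pow_dvd_pow 2 hj.le), Nat.pow_div hj.le (by norm_num)]

lemma orderOf_a (m : ℕ) :
    orderOf ((ofAdd 1, 1) : Multiplicative (ZMod 2) × Multiplicative (ZMod (2^m))) = 2 := by
  rw [Prod.orderOf_mk, orderOf_one, Nat.lcm_one_right, orderOf_ofAdd_eq_addOrderOf,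
    ZMod.addOrderOf_one]

lemma orderOf_b (m j : ℕ) (hj : j < m) :
    orderOf ((1, ofAdd ((2^j : ℕ) : ZMod (2^m))) :
      Multiplicative (ZMod 2) × Multiplicative (ZMod (2^m))) = 2^(m-j) := by
  rw [Prod.orderOf_mk, orderOf_one, Nat.lcm_one_left, orderOf_pow2 m j hj]

lemma orderOf_c (m j : ℕ) (hj : j < m) :
    orderOf ((ofAdd 1, ofAdd ((2^j : ℕ) : ZMod (2^m))) :
      Multiplicative (ZMod 2) × Multiplicative (ZMod (2^m))) = 2^(m-j) := by
  rw [Prod.orderOf_mk, orderOf_ofAdd_eq_addOrderOf, ZMod.addOrderOf_one, orderOf_pow2 m j hj]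
  exact Nat.dvd_antisymm
    (Nat.lcm_dvd (dvd_pow_self 2 (by omega : m - j ≠ 0)) dvd_rfl)
    (Nat.dvd_lcm_right _ _)

lemma sq_eq_one (x : Multiplicative (ZMod 2)) : x ^ 2 = 1 := by revert x; decide

lemma coverage (m : ℕ) (hm : 0 < m)
    (H : Subgroup (Multiplicative (ZMod 2) × Multiplicative (ZMod (2^m)))) (h : IsCyclic H) :
    ∃ i, H = Subgroup.zpowers (gens m i) := by
  haveI : NeZero (2^m) := ⟨by positivity⟩
  obtain ⟨⟨x, y⟩, rfl⟩ := eq_zpowers_of_isCyclic H h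
  have hx2 : ∀ z : ZMod 2, z = 0 ∨ z = 1 := by decide
  by_cases hy : y.toAdd = 0
  · have hy1 : y = 1 := toAdd_eq_zero.mp hy
    rcases hx2 x.toAdd with h0 | h1
    · exact ⟨.inl false, by rw [hy1, show x = 1 from toAdd_eq_zero.mp h0]; rfl⟩
    · refine ⟨.inl true, ?_⟩
      rw [hy1, show x = ofAdd 1 by rw [← ofAdd_toAdd x, h1]]
      rfl
  · set n := y.toAdd.val with hndef
    have hn0 : n ≠ 0 := fun hh => hy (by rwa [ZMod.val_eq_zero] at hh)
    have hnlt : n < 2^m := ZMod.val_lt _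
    obtain ⟨j, u, hu2, hnu⟩ := Nat.exists_eq_pow_mul_and_not_dvd hn0 2 (by norm_num)
    have hu0 : u ≠ 0 := fun hh => hn0 (by simp [hnu, hh])
    have hj : j < m := by
      have h1 : 2^j ≤ n := hnu ▸ Nat.le_mul_of_pos_right _ (Nat.pos_of_ne_zero hu0)
      exact (Nat.pow_lt_pow_iff_right (by norm_num)).mp (lt_of_le_of_lt h1 hnlt)
    set c : ZMod (2^m) := ((2^j : ℕ) : ZMod (2^m)) with hcdef
    have hyc : u • c = y.toAdd := by
      have hh : u * 2^j = n := by rw [hnu]; ring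
      rw [hcdef, nsmul_eq_mul, ← Nat.cast_mul, hh, hndef, ZMod.natCast_val, ZMod.cast_id]
    have hxsq : x ^ 2 = 1 := sq_eq_one x
    have hgu : ((x, ofAdd c) : Multiplicative (ZMod 2) × Multiplicative (ZMod (2^m)))^u = (x, y) := by
      obtain ⟨q, hq⟩ := Nat.odd_iff.mpr (Nat.two_dvd_ne_zero.mp hu2)
      refine Prod.ext ?_ ?_
      · show x ^ u = x
        rw [hq, pow_add, pow_mul, hxsq, one_pow, pow_one, one_mul]
      · show (ofAdd c) ^ u = y
        rw [← ofAdd_nsmul, hyc, ofAdd_toAdd]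
    have hD : orderOf ((x, ofAdd c) : Multiplicative (ZMod 2) × Multiplicative (ZMod (2^m)))
        = 2^(m-j) := by
      rw [Prod.orderOf_mk, orderOf_pow2 m j hj]
      refine Nat.dvd_antisymm (Nat.lcm_dvd ?_ dvd_rfl) (Nat.dvd_lcm_right _ _)
      exact dvd_trans (orderOf_dvd_of_pow_eq_one hxsq)
        (dvd_pow_self 2 (by omega : m - j ≠ 0))
    have hcop : Nat.Coprime u
        (orderOf ((x, ofAdd c) : Multiplicative (ZMod 2) × Multiplicative (ZMod (2^m)))) := by
      rw [hD]
      exact (Nat.coprime_two_right.mpr (Nat.odd_iff.mpr (Nat.two_dvd_ne_zero.mp hu2))).pow_right _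
    have h1lt : 1 < orderOf ((x, ofAdd c) :
        Multiplicative (ZMod 2) × Multiplicative (ZMod (2^m))) := by
      rw [hD]
      exact Nat.one_lt_pow (by omega) (by norm_num)
    have hz : Subgroup.zpowers ((x, y) : Multiplicative (ZMod 2) × Multiplicative (ZMod (2^m)))
        = Subgroup.zpowers (x, ofAdd c) := by
      rw [← hgu]; exact zpowers_pow_eq _ u hcop h1lt
    rcases hx2 x.toAdd with h0 | h1
    · refine ⟨.inr (.inl ⟨j, hj⟩), ?_⟩
      rw [hz, show x = 1 from toAdd_eq_zero.mp h0]
      rfl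
    · refine ⟨.inr (.inr ⟨j, hj⟩), ?_⟩
      rw [hz, show x = ofAdd 1 by rw [← ofAdd_toAdd x, h1]]
      rfl

lemma gens_inj (m : ℕ) (hm : 0 < m) :
    Function.Injective (fun i => Subgroup.zpowers (gens m i)) := by
  have o0 : orderOf (gens m (.inl false)) = 1 := orderOf_one
  have o1 : orderOf (gens m (.inl true)) = 2 := orderOf_a m
  have ob : ∀ j : Fin m, orderOf (gens m (.inr (.inl j))) = 2^(m - (j:ℕ)) :=
    fun j => orderOf_b m j j.2
  have oc : ∀ j : Fin m, orderOf (gens m (.inr (.inr j))) = 2^(m - (j:ℕ)) :=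
    fun j => orderOf_c m j j.2
  have hpow2 : ∀ j : Fin m, 2 ≤ 2^(m - (j:ℕ)) := fun j => by
    calc 2 = 2^1 := rfl
    _ ≤ 2^(m - (j:ℕ)) := Nat.pow_le_pow_right (by norm_num) (by omega)
  intro i i' h
  simp only at h
  have horder : orderOf (gens m i) = orderOf (gens m i') := by
    rw [← Nat.card_zpowers, ← Nat.card_zpowers, h]
  rcases i with b | j | j <;> rcases i' with b' | j' | j'
  · -- inl inl
    cases b <;> cases b'
    · rfl
    · rw [o0, o1] at horder; omega
    · rw [o1, o0] at horder; omega
    · rfl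
  · -- inl, inr inl
    exfalso
    cases b
    · rw [o0, ob j'] at horder; have := hpow2 j'; omega
    · have hmem : (gens m (.inl true)) ∈ Subgroup.zpowers (gens m (.inl true)) :=
        Subgroup.mem_zpowers _
      rw [h] at hmem
      exact ha_not_b m j' j'.2 hmem
  · -- inl, inr inr
    exfalso
    cases b
    · rw [o0, oc j'] at horder; have := hpow2 j'; omega
    · have hmem : (gens m (.inl true)) ∈ Subgroup.zpowers (gens m (.inl true)) :=
        Subgroup.mem_zpowers _
      rw [h] at hmem
      exact ha_not_c m j' j'.2 hmem
  · -- inr inl, inl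
    exfalso
    cases b'
    · rw [o0, ob j] at horder; have := hpow2 j; omega
    · have hmem : (gens m (.inl true)) ∈ Subgroup.zpowers (gens m (.inl true)) :=
        Subgroup.mem_zpowers _
      rw [← h] at hmem
      exact ha_not_b m j j.2 hmem
  · -- inr inl, inr inl
    rw [ob, ob] at horder
    have := Nat.pow_right_injective (le_refl 2) horder
    have hj : j = j' := Fin.ext (by have := j.2; have := j'.2; omega)
    rw [hj]
  · -- inr inl, inr inr
    exfalso
    rw [ob, oc] at horder
    have := Nat.pow_right_injective (le_refl 2) horder
    have hj : j' = (⟨(j:ℕ), j.2⟩ : Fin m) := Fin.ext (by have := j.2; have := j'.2; simp; omega)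
    subst hj
    have hmem : (gens m (.inr (.inl j))) ∈ Subgroup.zpowers (gens m (.inr (.inl j))) :=
      Subgroup.mem_zpowers _
    rw [h] at hmem
    exact hb_not_c m j j.2 hmem
  · -- inr inr, inl
    exfalso
    cases b'
    · rw [o0, oc j] at horder; have := hpow2 j; omega
    · have hmem : (gens m (.inl true)) ∈ Subgroup.zpowers (gens m (.inl true)) :=
        Subgroup.mem_zpowers _
      rw [← h] at hmem
      exact ha_not_c m j j.2 hmem
  · -- inr inr, inr inl
    exfalso
    rw [oc, ob] at horder
    have := Nat.pow_right_injective (le_refl 2) horder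
    have hj : j' = (⟨(j:ℕ), j.2⟩ : Fin m) := Fin.ext (by have := j.2; have := j'.2; simp; omega)
    subst hj
    have hmem : (gens m (.inr (.inl j))) ∈ Subgroup.zpowers (gens m (.inr (.inl j))) :=
      Subgroup.mem_zpowers _
    rw [← h] at hmem
    exact hb_not_c m j j.2 hmem
  · -- inr inr, inr inr
    rw [oc, oc] at horder
    have := Nat.pow_right_injective (le_refl 2) horder
    have hj : j = j' := Fin.ext (by have := j.2; have := j'.2; omega)
    rw [hj]

end CardCyclicAux

open CardCyclicAux

/-- For every positive integer `m`, the number of cyclic subgroups of `ℤ₂ × ℤ_{2^m}` equals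
`2m + 2`. -/
theorem card_cyclic_subgroup_Z2_prod_Z2m (m : ℕ) (hm : 0 < m) :
    Nat.card {H : Subgroup (Multiplicative (ZMod 2) × Multiplicative (ZMod (2 ^ m))) //
        IsCyclic H}
      = 2 * m + 2 := by
  have hrange : {H : Subgroup (Multiplicative (ZMod 2) × Multiplicative (ZMod (2 ^ m))) |
      IsCyclic H} = Set.range (fun i => Subgroup.zpowers (gens m i)) := by
    ext H
    constructor
    · intro hH
      obtain ⟨i, hi⟩ := coverage m hm H hH
      exact ⟨i, hi.symm⟩
    · rintro ⟨i, rfl⟩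
      exact CardCyclicAux.isCyclic_zpowers _
  have h1 : Nat.card {H : Subgroup (Multiplicative (ZMod 2) × Multiplicative (ZMod (2 ^ m))) //
      IsCyclic H} = Nat.card ↥(Set.range (fun i => Subgroup.zpowers (gens m i))) :=
    Nat.card_congr (Equiv.setCongr hrange)
  rw [h1, Nat.card_range_of_injective (gens_inj m hm)]
  simp [Nat.card_eq_fintype_card]
  omega
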